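/- Let T > 0, θ > 0 and let v : ℝ³ × (0,T] → ℝ³ be measurable with v(·,s) ∈ L⁸(ℝ³;ℝ³) for each s and sup_{0<s≤T} s^{5/16} ‖v(·,s)‖_{L⁸(ℝ³)} ≤ θ. Then there exists an absolute constant C > 0, independent of v, θ, T, such that for all t ∈ (0,T], ‖∫_0^t ∇G(·, t−s) ∗ (v ⊗ v)(·,s) ds‖_{L^∞(ℝ³)} ≤ C θ² t^{−1/2}. -/

import Mathlib

open MeasureTheory Real Set
open scoped ENNReal RealInnerProductSpace

noncomputable section

/-- Euclidean space `ℝ³`. -/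
abbrev E3 := EuclideanSpace ℝ (Fin 3)

/-- The heat kernel on `ℝ³`. -/
def heatKernel (t : ℝ) (x : E3) : ℝ :=
  (4 * Real.pi * t) ^ (-(3:ℝ)/2) * Real.exp (-‖x‖^2 / (4*t))

/-- The Duhamel-type term `∫₀ᵗ ∇G(·,t-s) ∗ (v ⊗ v)(·,s) ds`; componentwise
`(∇G ∗ (v ⊗ v))_i (x) = ∑_j (∂_j G) ∗ (v_i v_j) (x) = ∫ ⟪∇G(y), v(x-y)⟫ v_i(x-y) dy`. -/
def duhamel (v : ℝ → E3 → E3) (t : ℝ) (x : E3) : E3 :=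
  ∫ s in Set.Ioo (0 : ℝ) t, ∫ y : E3,
    ⟪gradient (heatKernel (t - s)) y, v s (x - y)⟫ • v s (x - y)

lemma hasGradientAt_heatKernel {τ : ℝ} (hτ : 0 < τ) (y : E3) :
    HasGradientAt (heatKernel τ)
      ((-((4 * Real.pi * τ) ^ (-(3:ℝ)/2) * Real.exp (-‖y‖^2 / (4*τ)) / (2*τ))) • y) y := by
  have hg : HasFDerivAt (fun x : E3 => ⟪x, x⟫)
      ((fderivInnerCLM ℝ (y, y)).comp ((ContinuousLinearMap.id ℝ E3).prod
        (ContinuousLinearMap.id ℝ E3))) y :=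
    (hasFDerivAt_id y).inner ℝ (hasFDerivAt_id y)
  have hsq : HasFDerivAt (fun x : E3 => -‖x‖^2 / (4*τ))
      ((-(4*τ)⁻¹ : ℝ) • ((fderivInnerCLM ℝ (y, y)).comp ((ContinuousLinearMap.id ℝ E3).prod
        (ContinuousLinearMap.id ℝ E3)))) y := by
    have : (fun x : E3 => -‖x‖^2 / (4*τ)) = fun x : E3 => (-(4*τ)⁻¹ : ℝ) * ⟪x, x⟫ := by
      funext x
      rw [real_inner_self_eq_norm_sq]
      ring
    rw [this]
    exact hg.const_mul _
  have hexp := (Real.hasDerivAt_exp (-‖y‖^2 / (4*τ))).comp_hasFDerivAt y hsq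
  have hfull := hexp.const_mul ((4 * Real.pi * τ) ^ (-(3:ℝ)/2))
  rw [hasGradientAt_iff_hasFDerivAt]
  convert hfull using 1
  · rfl
  · rfl
  apply ContinuousLinearMap.ext
  intro z
  simp only [InnerProductSpace.toDual_apply_apply, ContinuousLinearMap.smul_apply,
    ContinuousLinearMap.comp_apply, ContinuousLinearMap.prod_apply, ContinuousLinearMap.id_apply,
    fderivInnerCLM_apply, real_inner_smul_left, smul_eq_mul, real_inner_comm z y]
  ring

lemma ofReal_norm_eq_coe_nnnorm {F : Type*} [SeminormedAddCommGroup F] (x : F) :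
    ENNReal.ofReal ‖x‖ = (‖x‖₊ : ℝ≥0∞) := ENNReal.ofReal_eq_coe_nnreal _

def A0 : ℝ := (4 * Real.pi) ^ (-(3:ℝ)/2) * Real.sqrt 8 / 2

lemma A0_pos : 0 < A0 := by
  have : (0:ℝ) < 4 * Real.pi := by positivity
  unfold A0
  positivity

lemma norm_gradient_heatKernel_le {τ : ℝ} (hτ : 0 < τ) (y : E3) :
    ‖gradient (heatKernel τ) y‖ ≤ A0 * τ ^ (-(2:ℝ)) * Real.exp (-‖y‖^2 / (8*τ)) := by
  have hgrad := (hasGradientAt_heatKernel hτ y).gradient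
  set r := ‖y‖ with hr
  have hrnn : 0 ≤ r := norm_nonneg y
  have hπ : (0:ℝ) < 4 * Real.pi := by positivity
  have hc : (4 * Real.pi * τ) ^ (-(3:ℝ)/2)
      = (4 * Real.pi) ^ (-(3:ℝ)/2) * τ ^ (-(3:ℝ)/2) :=
    Real.mul_rpow hπ.le hτ.le
  have hnorm : ‖gradient (heatKernel τ) y‖
      = (4 * Real.pi) ^ (-(3:ℝ)/2) * τ ^ (-(3:ℝ)/2) / (2*τ)
        * (r * Real.exp (-r^2 / (4*τ))) := by
    rw [hgrad, norm_smul, Real.norm_eq_abs, abs_neg, abs_of_nonneg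
      (div_nonneg (mul_nonneg (Real.rpow_nonneg (show (0:ℝ) ≤ 4*Real.pi*τ from mul_nonneg (by positivity) hτ.le) _)
        (Real.exp_pos _).le) (by linarith)), hc]
    ring
  set a : ℝ := Real.sqrt 8 * τ ^ ((1:ℝ)/2) with haa
  have hapos : 0 < a := by
    apply mul_pos (Real.sqrt_pos.2 (by norm_num)) (Real.rpow_pos_of_pos hτ _)
  have ha2 : a^2 = 8 * τ := by
    rw [haa, mul_pow, Real.sq_sqrt (by norm_num : (0:ℝ) ≤ 8),
      ← Real.rpow_natCast (τ ^ ((1:ℝ)/2)) 2, ← Real.rpow_mul hτ.le]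
    norm_num
  have hexp8 : (0:ℝ) < 8 * τ := by linarith
  have key : r * Real.exp (-r^2 / (4*τ)) ≤ a * Real.exp (-r^2 / (8*τ)) := by
    have hsplit : Real.exp (-r^2 / (4*τ))
        = Real.exp (-r^2 / (8*τ)) * Real.exp (-r^2 / (8*τ)) := by
      rw [← Real.exp_add]
      congr 1
      field_simp
      ring
    have h1 : r * Real.exp (-r^2 / (8*τ)) ≤ a := by
      rw [neg_div, Real.exp_neg, mul_inv_le_iff₀ (Real.exp_pos _)]
      have h2 := Real.add_one_le_exp (r^2 / (8*τ))
      have h3 : r ≤ a * (r^2 / (8*τ) + 1) := by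
        have heq : a * (r^2/(8*τ) + 1) = (r^2 + a^2)/a := by
          rw [← ha2]; field_simp
        rw [heq, le_div_iff₀ hapos]
        nlinarith [sq_nonneg (r - a)]
      calc r ≤ a * (r^2 / (8*τ) + 1) := h3
        _ ≤ a * Real.exp (r^2 / (8*τ)) := by
            apply mul_le_mul_of_nonneg_left _ hapos.le
            linarith [h2]
    calc r * Real.exp (-r^2 / (4*τ))
        = (r * Real.exp (-r^2 / (8*τ))) * Real.exp (-r^2 / (8*τ)) := by
          rw [hsplit]; ring
      _ ≤ a * Real.exp (-r^2 / (8*τ)) :=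
          mul_le_mul_of_nonneg_right h1 (Real.exp_pos _).le
  have hcoef : (0:ℝ) ≤ (4 * Real.pi) ^ (-(3:ℝ)/2) * τ ^ (-(3:ℝ)/2) / (2*τ) :=
    div_nonneg (mul_nonneg (Real.rpow_nonneg (show (0:ℝ) ≤ 4*Real.pi from by positivity) _) (Real.rpow_nonneg hτ.le _))
      (by linarith)
  have hfinal : (4 * Real.pi) ^ (-(3:ℝ)/2) * τ ^ (-(3:ℝ)/2) / (2*τ)
      * (a * Real.exp (-r^2 / (8*τ)))
      = A0 * τ ^ (-(2:ℝ)) * Real.exp (-r^2 / (8*τ)) := by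
    have hpow : τ ^ (-(3:ℝ)/2) * τ ^ ((1:ℝ)/2) / τ = τ ^ (-(2:ℝ)) := by
      rw [← Real.rpow_add hτ, div_eq_mul_inv, ← Real.rpow_neg_one τ, ← Real.rpow_add hτ]
      norm_num
    rw [haa, A0, ← hpow]
    field_simp
  rw [hnorm]
  calc (4 * Real.pi) ^ (-(3:ℝ)/2) * τ ^ (-(3:ℝ)/2) / (2*τ) * (r * Real.exp (-r^2 / (4*τ)))
      ≤ (4 * Real.pi) ^ (-(3:ℝ)/2) * τ ^ (-(3:ℝ)/2) / (2*τ)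
        * (a * Real.exp (-r^2 / (8*τ))) := mul_le_mul_of_nonneg_left key hcoef
    _ = A0 * τ ^ (-(2:ℝ)) * Real.exp (-r^2 / (8*τ)) := hfinal

lemma continuous_gradient_heatKernel {τ : ℝ} (hτ : 0 < τ) :
    Continuous (fun y : E3 => gradient (heatKernel τ) y) := by
  have heq : (fun y : E3 => gradient (heatKernel τ) y)
      = fun y : E3 => (-((4 * Real.pi * τ) ^ (-(3:ℝ)/2) * Real.exp (-‖y‖^2 / (4*τ)) / (2*τ))) • y :=
    funext fun y => (hasGradientAt_heatKernel hτ y).gradient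
  rw [heq]
  fun_prop

lemma integrable_gaussian_E3 {b : ℝ} (hb : 0 < b) :
    Integrable (fun y : E3 => Real.exp (-b * ‖y‖^2)) := by
  have h := GaussianFourier.integrable_cexp_neg_mul_sq_norm_add_of_euclideanSpace
    (b := (b:ℂ)) (by simpa using hb) 0 (0 : EuclideanSpace ℝ (Fin 3))
  have h2 := h.norm
  apply h2.congr
  apply ae_of_all
  intro y
  simp only [Complex.norm_exp]
  norm_num
  left
  norm_cast

def A1 : ℝ := A0 * (6 * Real.pi) ^ ((9:ℝ)/8)

lemma A1_pos : 0 < A1 := by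
  have : (0:ℝ) < 6 * Real.pi := by positivity
  exact mul_pos A0_pos (Real.rpow_pos_of_pos this _)

lemma lintegral_grad_rpow {τ : ℝ} (hτ : 0 < τ) :
    (∫⁻ y : E3, (‖gradient (heatKernel τ) y‖₊ : ℝ≥0∞) ^ ((4:ℝ)/3)) ^ ((3:ℝ)/4)
      ≤ ENNReal.ofReal (A1 * τ ^ (-(7:ℝ)/8)) := by
  set P : ℝ := A0 * τ ^ (-(2:ℝ)) with hP
  have hPpos : 0 < P := mul_pos A0_pos (Real.rpow_pos_of_pos hτ _)
  have hb : (0:ℝ) < 1/(6*τ) := by positivity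
  -- pointwise bound
  have hpt : ∀ y : E3, (‖gradient (heatKernel τ) y‖₊ : ℝ≥0∞) ^ ((4:ℝ)/3)
      ≤ ENNReal.ofReal (P ^ ((4:ℝ)/3) * Real.exp (-(1/(6*τ)) * ‖y‖^2)) := by
    intro y
    have h1 : (‖gradient (heatKernel τ) y‖₊ : ℝ≥0∞)
        ≤ ENNReal.ofReal (P * Real.exp (-‖y‖^2 / (8*τ))) := by
      rw [← ofReal_norm_eq_coe_nnnorm]
      exact ENNReal.ofReal_le_ofReal (norm_gradient_heatKernel_le hτ y)
    calc (‖gradient (heatKernel τ) y‖₊ : ℝ≥0∞) ^ ((4:ℝ)/3)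
        ≤ (ENNReal.ofReal (P * Real.exp (-‖y‖^2 / (8*τ)))) ^ ((4:ℝ)/3) :=
          ENNReal.rpow_le_rpow h1 (by norm_num)
      _ = ENNReal.ofReal ((P * Real.exp (-‖y‖^2 / (8*τ))) ^ ((4:ℝ)/3)) :=
          ENNReal.ofReal_rpow_of_nonneg (by positivity) (by norm_num)
      _ = ENNReal.ofReal (P ^ ((4:ℝ)/3) * Real.exp (-(1/(6*τ)) * ‖y‖^2)) := by
          congr 1
          rw [Real.mul_rpow hPpos.le (Real.exp_pos _).le, ← Real.exp_mul]
          congr 2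
          field_simp
          ring
  -- integrate
  have hint : (∫⁻ y : E3, (‖gradient (heatKernel τ) y‖₊ : ℝ≥0∞) ^ ((4:ℝ)/3))
      ≤ ENNReal.ofReal (P ^ ((4:ℝ)/3) * (Real.pi / (1/(6*τ))) ^ ((3:ℝ)/2)) := by
    calc (∫⁻ y : E3, (‖gradient (heatKernel τ) y‖₊ : ℝ≥0∞) ^ ((4:ℝ)/3))
        ≤ ∫⁻ y : E3, ENNReal.ofReal (P ^ ((4:ℝ)/3) * Real.exp (-(1/(6*τ)) * ‖y‖^2)) :=
          lintegral_mono hpt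
      _ = ENNReal.ofReal (∫ y : E3, P ^ ((4:ℝ)/3) * Real.exp (-(1/(6*τ)) * ‖y‖^2)) := by
          rw [← ofReal_integral_eq_lintegral_ofReal ((integrable_gaussian_E3 hb).const_mul _)
            (ae_of_all _ fun y => by positivity)]
      _ = ENNReal.ofReal (P ^ ((4:ℝ)/3) * (Real.pi / (1/(6*τ))) ^ ((3:ℝ)/2)) := by
          rw [integral_const_mul, GaussianFourier.integral_rexp_neg_mul_sq_norm (V := E3) hb]
          norm_num [finrank_euclideanSpace_fin]
  -- take power 3/4
  calc (∫⁻ y : E3, (‖gradient (heatKernel τ) y‖₊ : ℝ≥0∞) ^ ((4:ℝ)/3)) ^ ((3:ℝ)/4)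
      ≤ (ENNReal.ofReal (P ^ ((4:ℝ)/3) * (Real.pi / (1/(6*τ))) ^ ((3:ℝ)/2))) ^ ((3:ℝ)/4) :=
        ENNReal.rpow_le_rpow hint (by norm_num)
    _ = ENNReal.ofReal (A1 * τ ^ (-(7:ℝ)/8)) := by
        rw [ENNReal.ofReal_rpow_of_nonneg (by positivity) (by norm_num)]
        congr 1
        have hpi : Real.pi / (1/(6*τ)) = 6 * Real.pi * τ := by field_simp
        rw [hpi, Real.mul_rpow (by positivity : (0:ℝ) ≤ P ^ ((4:ℝ)/3)) (by positivity),
          ← Real.rpow_mul hPpos.le, ← Real.rpow_mul (by positivity : (0:ℝ) ≤ 6*Real.pi*τ)]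
        rw [show (4:ℝ)/3 * (3/4) = 1 by norm_num, show (3:ℝ)/2 * (3/4) = (9:ℝ)/8 by norm_num,
          Real.rpow_one, hP, A1, Real.mul_rpow (by positivity : (0:ℝ) ≤ 6*Real.pi) hτ.le,
          show (-(7:ℝ)/8) = (-(2:ℝ)) + (9:ℝ)/8 by norm_num, Real.rpow_add hτ]
        ring

lemma inner_integral_bound {τ : ℝ} (hτ : 0 < τ) (w : E3 → E3) (hw : Measurable w) (x : E3) :
    (‖∫ y : E3, ⟪gradient (heatKernel τ) y, w (x - y)⟫ • w (x - y)‖₊ : ℝ≥0∞)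
      ≤ ENNReal.ofReal (A1 * τ ^ (-(7:ℝ)/8)) * (eLpNorm w 8 volume) ^ (2:ℝ) := by
  set g := fun y : E3 => gradient (heatKernel τ) y with hg
  have hgm : Measurable g := (continuous_gradient_heatKernel hτ).measurable
  have hwx : Measurable (fun y : E3 => w (x - y)) :=
    hw.comp (measurable_const.sub measurable_id)
  -- step 1: into lintegral
  have step1 : (‖∫ y : E3, ⟪g y, w (x - y)⟫ • w (x - y)‖₊ : ℝ≥0∞)
      ≤ ∫⁻ y : E3, (‖g y‖₊ : ℝ≥0∞) * ((‖w (x - y)‖₊ : ℝ≥0∞) ^ (2:ℝ)) := by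
    refine (enorm_integral_le_lintegral_enorm _).trans (lintegral_mono fun y => ?_)
    have hpt : ‖⟪g y, w (x - y)⟫ • w (x - y)‖ ≤ ‖g y‖ * ‖w (x - y)‖^2 := by
      rw [norm_smul, Real.norm_eq_abs]
      calc |⟪g y, w (x - y)⟫| * ‖w (x - y)‖
          ≤ ‖g y‖ * ‖w (x - y)‖ * ‖w (x - y)‖ :=
            mul_le_mul_of_nonneg_right (abs_real_inner_le_norm _ _) (norm_nonneg _)
        _ = ‖g y‖ * ‖w (x - y)‖^2 := by ring
    calc (‖⟪g y, w (x - y)⟫ • w (x - y)‖₊ : ℝ≥0∞)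
        = ENNReal.ofReal ‖⟪g y, w (x - y)⟫ • w (x - y)‖ := (ofReal_norm_eq_coe_nnnorm _).symm
      _ ≤ ENNReal.ofReal (‖g y‖ * ‖w (x - y)‖^2) := ENNReal.ofReal_le_ofReal hpt
      _ = (‖g y‖₊ : ℝ≥0∞) * ((‖w (x - y)‖₊ : ℝ≥0∞) ^ (2:ℝ)) := by
          rw [ENNReal.ofReal_mul (norm_nonneg _), ofReal_norm_eq_coe_nnnorm,
            ENNReal.ofReal_pow (norm_nonneg _), ofReal_norm_eq_coe_nnnorm,
            ← ENNReal.rpow_natCast]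
          norm_num
  -- step 2: Hoelder
  have hpq : Real.HolderConjugate ((4:ℝ)/3) 4 := ⟨by norm_num, by norm_num, by norm_num⟩
  have step2 := ENNReal.lintegral_mul_le_Lp_mul_Lq volume hpq
    (f := fun y : E3 => (‖g y‖₊ : ℝ≥0∞))
    (g := fun y : E3 => (‖w (x - y)‖₊ : ℝ≥0∞) ^ (2:ℝ))
    hgm.enorm.aemeasurable (hwx.enorm.pow_const _).aemeasurable
  -- step 3: second factor
  have step3 : (∫⁻ y : E3, ((‖w (x - y)‖₊ : ℝ≥0∞) ^ (2:ℝ)) ^ (4:ℝ)) ^ ((1:ℝ)/4)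
      = (eLpNorm w 8 volume) ^ (2:ℝ) := by
    have htrans : (∫⁻ y : E3, (‖w (x - y)‖₊ : ℝ≥0∞) ^ (8:ℝ))
        = ∫⁻ y : E3, (‖w y‖₊ : ℝ≥0∞) ^ (8:ℝ) := by
      exact (MeasureTheory.Measure.measurePreserving_sub_left volume x).lintegral_comp
        (hw.enorm.pow_const _)
    have h8 : ∀ z : ℝ≥0∞, (z ^ (2:ℝ)) ^ (4:ℝ) = z ^ (8:ℝ) := fun z => by
      rw [← ENNReal.rpow_mul]; norm_num
    simp_rw [h8, htrans]
    rw [eLpNorm_eq_lintegral_rpow_enorm_toReal (by norm_num) (by norm_num)]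
    rw [← ENNReal.rpow_mul]
    norm_num
    rfl
  calc (‖∫ y : E3, ⟪g y, w (x - y)⟫ • w (x - y)‖₊ : ℝ≥0∞)
      ≤ ∫⁻ y : E3, (‖g y‖₊ : ℝ≥0∞) * ((‖w (x - y)‖₊ : ℝ≥0∞) ^ (2:ℝ)) := step1
    _ ≤ (∫⁻ y : E3, (‖g y‖₊ : ℝ≥0∞) ^ ((4:ℝ)/3)) ^ (1/((4:ℝ)/3))
        * (∫⁻ y : E3, ((‖w (x - y)‖₊ : ℝ≥0∞) ^ (2:ℝ)) ^ (4:ℝ)) ^ ((1:ℝ)/4) := step2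
    _ ≤ ENNReal.ofReal (A1 * τ ^ (-(7:ℝ)/8)) * (eLpNorm w 8 volume) ^ (2:ℝ) := by
        rw [step3]
        apply mul_le_mul_left _ _
        rw [show (1/((4:ℝ)/3)) = (3:ℝ)/4 by norm_num]
        exact lintegral_grad_rpow hτ

lemma time_integral_bound {t : ℝ} (ht : 0 < t) :
    IntegrableOn (fun s => (t - s) ^ (-(7:ℝ)/8) * s ^ (-(5:ℝ)/8)) (Ioo 0 t) volume ∧
    ∫ s in Ioo 0 t, (t - s) ^ (-(7:ℝ)/8) * s ^ (-(5:ℝ)/8)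
      ≤ (32/3 * Real.sqrt 2) * t ^ (-(1:ℝ)/2) := by
  have ht2 : (0:ℝ) < t/2 := by linarith
  set f : ℝ → ℝ := fun s => (t - s) ^ (-(7:ℝ)/8) * s ^ (-(5:ℝ)/8) with hf
  set m1 : ℝ → ℝ := fun s => (t/2) ^ (-(7:ℝ)/8) * s ^ (-(5:ℝ)/8) with hm1
  set m2 : ℝ → ℝ := fun s => (t/2) ^ (-(5:ℝ)/8) * (t - s) ^ (-(7:ℝ)/8) with hm2
  have hm1i : IntegrableOn m1 (Ioc 0 (t/2)) volume := by
    rw [← intervalIntegrable_iff_integrableOn_Ioc_of_le ht2.le]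
    exact (intervalIntegral.intervalIntegrable_rpow' (by norm_num)).const_mul _
  have hm2i : IntegrableOn m2 (Ioc (t/2) t) volume := by
    rw [← intervalIntegrable_iff_integrableOn_Ioc_of_le (by linarith)]
    apply IntervalIntegrable.const_mul
    have h0 : IntervalIntegrable (fun u : ℝ => u ^ (-(7:ℝ)/8)) volume 0 (t/2) :=
      intervalIntegral.intervalIntegrable_rpow' (by norm_num)
    have h1 := (h0.comp_sub_left t).symm
    simpa [sub_half] using h1
  -- pointwise bounds on pieces
  have hb1 : ∀ s ∈ Ioc 0 (t/2), f s ≤ m1 s := by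
    intro s hs
    show (t - s) ^ (-(7:ℝ)/8) * s ^ (-(5:ℝ)/8) ≤ (t/2) ^ (-(7:ℝ)/8) * s ^ (-(5:ℝ)/8)
    apply mul_le_mul_of_nonneg_right _ (Real.rpow_nonneg hs.1.le _)
    exact Real.rpow_le_rpow_of_nonpos ht2 (by linarith [hs.2]) (by norm_num)
  have hb2 : ∀ s ∈ Ioc (t/2) t, f s ≤ m2 s := by
    intro s hs
    show (t - s) ^ (-(7:ℝ)/8) * s ^ (-(5:ℝ)/8) ≤ (t/2) ^ (-(5:ℝ)/8) * (t - s) ^ (-(7:ℝ)/8)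
    rw [mul_comm ((t/2) ^ (-(5:ℝ)/8))]
    apply mul_le_mul_of_nonneg_left _ (Real.rpow_nonneg (by linarith [hs.2] : (0:ℝ) ≤ t - s) _)
    exact Real.rpow_le_rpow_of_nonpos ht2 hs.1.le (by norm_num)
  have hfnn1 : ∀ s ∈ Ioc (0:ℝ) (t/2), 0 ≤ f s := fun s hs =>
    mul_nonneg (Real.rpow_nonneg (by linarith [hs.2] : (0:ℝ) ≤ t - s) _)
      (Real.rpow_nonneg hs.1.le _)
  have hfnn2 : ∀ s ∈ Ioc (t/2) t, 0 ≤ f s := fun s hs =>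
    mul_nonneg (Real.rpow_nonneg (by linarith [hs.2] : (0:ℝ) ≤ t - s) _)
      (Real.rpow_nonneg (by linarith [hs.1] : (0:ℝ) ≤ s) _)
  have hcont : ContinuousOn f {x : ℝ | x ≠ 0 ∧ x ≠ t} := by
    apply ContinuousOn.mul
    · apply ContinuousOn.rpow_const (continuous_const.sub continuous_id).continuousOn
      intro x hx
      left
      intro h
      have hxt : t = x := by simpa using sub_eq_zero.1 h
      exact hx.2 hxt.symm
    · apply ContinuousOn.rpow_const continuousOn_id
      intro x hx
      exact Or.inl hx.1
  have hsub1 : Ioc (0:ℝ) (t/2) ⊆ {x : ℝ | x ≠ 0 ∧ x ≠ t} := fun x hx =>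
    ⟨hx.1.ne', by intro h; rw [h] at hx; linarith [hx.2]⟩
  have hsub2 : Ioo (t/2) t ⊆ {x : ℝ | x ≠ 0 ∧ x ≠ t} := fun x hx =>
    ⟨(show (0:ℝ) < x by linarith [hx.1]).ne', hx.2.ne⟩
  have hfi1 : IntegrableOn f (Ioc 0 (t/2)) volume := by
    apply hm1i.mono' ((hcont.mono hsub1).aestronglyMeasurable measurableSet_Ioc)
    refine (ae_restrict_iff' measurableSet_Ioc).2 (ae_of_all _ fun s hs => ?_)
    rw [Real.norm_eq_abs, abs_of_nonneg (hfnn1 s hs)]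
    exact hb1 s hs
  have hfi2 : IntegrableOn f (Ioc (t/2) t) volume := by
    rw [integrableOn_Ioc_iff_integrableOn_Ioo]
    apply (hm2i.mono_set Ioo_subset_Ioc_self).mono'
      ((hcont.mono hsub2).aestronglyMeasurable measurableSet_Ioo)
    refine (ae_restrict_iff' measurableSet_Ioo).2 (ae_of_all _ fun s hs => ?_)
    rw [Real.norm_eq_abs, abs_of_nonneg (hfnn2 s (Ioo_subset_Ioc_self hs))]
    exact hb2 s (Ioo_subset_Ioc_self hs)
  have hunion : Ioc (0:ℝ) (t/2) ∪ Ioc (t/2) t = Ioc 0 t :=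
    Ioc_union_Ioc_eq_Ioc ht2.le (by linarith)
  have hdisj : Disjoint (Ioc (0:ℝ) (t/2)) (Ioc (t/2) t) := Set.Ioc_disjoint_Ioc_of_le le_rfl
  have hfi : IntegrableOn f (Ioc 0 t) volume := by
    rw [← hunion]
    exact hfi1.union hfi2
  -- majorant integrals
  have hI1 : ∫ s in Ioc 0 (t/2), m1 s = (t/2) ^ (-(7:ℝ)/8) * ((8:ℝ)/3 * (t/2) ^ ((3:ℝ)/8)) := by
    rw [← intervalIntegral.integral_of_le ht2.le, hm1, intervalIntegral.integral_const_mul]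
    congr 1
    rw [integral_rpow (Or.inl (by norm_num)), Real.zero_rpow (by norm_num)]
    norm_num
    ring
  have hI2 : ∫ s in Ioc (t/2) t, m2 s = (t/2) ^ (-(5:ℝ)/8) * ((8:ℝ) * (t/2) ^ ((1:ℝ)/8)) := by
    rw [← intervalIntegral.integral_of_le (by linarith : t/2 ≤ t), hm2,
      intervalIntegral.integral_const_mul]
    congr 1
    rw [intervalIntegral.integral_comp_sub_left (fun u => u ^ (-(7:ℝ)/8)) t, sub_self, sub_half,
      integral_rpow (Or.inl (by norm_num)), Real.zero_rpow (by norm_num)]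
    norm_num
    ring
  have hsplit : ∫ s in Ioc 0 t, f s = (∫ s in Ioc 0 (t/2), f s) + ∫ s in Ioc (t/2) t, f s := by
    rw [← hunion, setIntegral_union hdisj measurableSet_Ioc hfi1 hfi2]
  have htot : ∫ s in Ioc 0 t, f s
      ≤ (t/2) ^ (-(7:ℝ)/8) * ((8:ℝ)/3 * (t/2) ^ ((3:ℝ)/8))
        + (t/2) ^ (-(5:ℝ)/8) * ((8:ℝ) * (t/2) ^ ((1:ℝ)/8)) := by
    rw [hsplit]
    apply add_le_add
    · rw [← hI1]
      exact setIntegral_mono_on hfi1 hm1i measurableSet_Ioc hb1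
    · rw [← hI2]
      exact setIntegral_mono_on hfi2 hm2i measurableSet_Ioc hb2
  have harith : (t/2) ^ (-(7:ℝ)/8) * ((8:ℝ)/3 * (t/2) ^ ((3:ℝ)/8))
        + (t/2) ^ (-(5:ℝ)/8) * ((8:ℝ) * (t/2) ^ ((1:ℝ)/8))
      = (32/3 * Real.sqrt 2) * t ^ (-(1:ℝ)/2) := by
    have e1 : (t/2) ^ (-(7:ℝ)/8) * (t/2) ^ ((3:ℝ)/8) = (t/2) ^ (-(1:ℝ)/2) := by
      rw [← Real.rpow_add ht2]; norm_num
    have e2 : (t/2) ^ (-(5:ℝ)/8) * (t/2) ^ ((1:ℝ)/8) = (t/2) ^ (-(1:ℝ)/2) := by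
      rw [← Real.rpow_add ht2]; norm_num
    have e3 : (t/2) ^ (-(1:ℝ)/2) = Real.sqrt 2 * t ^ (-(1:ℝ)/2) := by
      rw [div_eq_mul_inv, Real.mul_rpow ht.le (by norm_num), Real.inv_rpow (by norm_num),
        ← Real.rpow_neg (by norm_num), Real.sqrt_eq_rpow]
      norm_num
      ring
    calc (t/2) ^ (-(7:ℝ)/8) * ((8:ℝ)/3 * (t/2) ^ ((3:ℝ)/8))
          + (t/2) ^ (-(5:ℝ)/8) * ((8:ℝ) * (t/2) ^ ((1:ℝ)/8))
        = (8:ℝ)/3 * ((t/2) ^ (-(7:ℝ)/8) * (t/2) ^ ((3:ℝ)/8))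
          + 8 * ((t/2) ^ (-(5:ℝ)/8) * (t/2) ^ ((1:ℝ)/8)) := by ring
      _ = (32:ℝ)/3 * (t/2) ^ (-(1:ℝ)/2) := by rw [e1, e2]; ring
      _ = (32/3 * Real.sqrt 2) * t ^ (-(1:ℝ)/2) := by rw [e3]; ring
  refine ⟨hfi.mono_set Ioo_subset_Ioc_self, ?_⟩
  rw [← integral_Ioc_eq_integral_Ioo]
  exact htot.trans_eq harith

theorem duhamel_term_Linfty_estimate :
    ∃ C : ℝ, 0 < C ∧
      ∀ T θ : ℝ, 0 < T → 0 < θ →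
        ∀ v : ℝ → E3 → E3, Measurable (fun p : ℝ × E3 => v p.1 p.2) →
          (∀ s ∈ Set.Ioc (0 : ℝ) T, MemLp (v s) 8 volume) →
          (∀ s ∈ Set.Ioc (0 : ℝ) T,
              eLpNorm (v s) 8 volume ≤ ENNReal.ofReal (θ * s ^ (-(5/16 : ℝ)))) →
          ∀ t ∈ Set.Ioc (0 : ℝ) T,
            eLpNorm (duhamel v t) ⊤ volume
              ≤ ENNReal.ofReal (C * θ^2 * t ^ (-(1/2 : ℝ))) := by
  refine ⟨A1 * (32/3 * Real.sqrt 2), mul_pos A1_pos (by positivity), ?_⟩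
  intro T θ hT hθ v hv _hMem h8 t ht
  have ht0 : 0 < t := ht.1
  set h : ℝ → ℝ := fun s => (A1 * θ^2) * ((t - s) ^ (-(7:ℝ)/8) * s ^ (-(5:ℝ)/8)) with hh
  have htime := time_integral_bound ht0
  -- pointwise bound on the inner integral
  have key : ∀ x : E3, ∀ s ∈ Ioo (0:ℝ) t,
      ‖∫ y : E3, ⟪gradient (heatKernel (t - s)) y, v s (x - y)⟫ • v s (x - y)‖ ≤ h s := by
    intro x s hs
    have hτ : 0 < t - s := by linarith [hs.2]
    have hms : Measurable (v s) := hv.comp measurable_prodMk_left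
    have hb := inner_integral_bound hτ (v s) hms x
    have hsT : s ∈ Set.Ioc (0:ℝ) T := ⟨hs.1, hs.2.le.trans ht.2⟩
    have h8s := h8 s hsT
    have hLp : (eLpNorm (v s) 8 volume) ^ (2:ℝ)
        ≤ ENNReal.ofReal (θ^2 * s ^ (-(5:ℝ)/8)) := by
      calc (eLpNorm (v s) 8 volume) ^ (2:ℝ)
          ≤ (ENNReal.ofReal (θ * s ^ (-(5/16 : ℝ)))) ^ (2:ℝ) :=
            ENNReal.rpow_le_rpow h8s (by norm_num)
        _ = ENNReal.ofReal ((θ * s ^ (-(5/16 : ℝ))) ^ (2:ℝ)) :=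
            ENNReal.ofReal_rpow_of_nonneg
              (mul_nonneg hθ.le (Real.rpow_nonneg hs.1.le _)) (by norm_num)
        _ = ENNReal.ofReal (θ^2 * s ^ (-(5:ℝ)/8)) := by
            congr 1
            rw [Real.mul_rpow hθ.le (Real.rpow_nonneg hs.1.le _),
              ← Real.rpow_mul hs.1.le]
            norm_num
    -- combine in ℝ≥0∞
    have hchain : (‖∫ y : E3, ⟪gradient (heatKernel (t - s)) y, v s (x - y)⟫
        • v s (x - y)‖₊ : ℝ≥0∞) ≤ ENNReal.ofReal (h s) := by
      calc (‖∫ y : E3, ⟪gradient (heatKernel (t - s)) y, v s (x - y)⟫ • v s (x - y)‖₊ : ℝ≥0∞)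
          ≤ ENNReal.ofReal (A1 * (t - s) ^ (-(7:ℝ)/8)) * (eLpNorm (v s) 8 volume) ^ (2:ℝ) := hb
        _ ≤ ENNReal.ofReal (A1 * (t - s) ^ (-(7:ℝ)/8))
            * ENNReal.ofReal (θ^2 * s ^ (-(5:ℝ)/8)) := mul_le_mul_right hLp _
        _ = ENNReal.ofReal (h s) := by
            rw [← ENNReal.ofReal_mul (mul_nonneg A1_pos.le (Real.rpow_nonneg hτ.le _))]
            congr 1
            rw [hh]
            ring
    have hhnn : 0 ≤ h s :=
      mul_nonneg (mul_nonneg A1_pos.le (sq_nonneg θ))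
        (mul_nonneg (Real.rpow_nonneg hτ.le _) (Real.rpow_nonneg hs.1.le _))
    have h2 := ENNReal.toReal_mono ENNReal.ofReal_ne_top hchain
    rwa [ENNReal.coe_toReal, coe_nnnorm, ENNReal.toReal_ofReal hhnn] at h2
  -- essential sup bound
  have hbd : ∀ x : E3, ‖duhamel v t x‖
      ≤ (A1 * (32/3 * Real.sqrt 2)) * θ^2 * t ^ (-(1:ℝ)/2) := by
    intro x
    have hhint : Integrable h ((volume : Measure ℝ).restrict (Ioo 0 t)) :=
      (htime.1.const_mul _)
    calc ‖duhamel v t x‖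
        ≤ ∫ s in Ioo (0:ℝ) t,
            ‖∫ y : E3, ⟪gradient (heatKernel (t - s)) y, v s (x - y)⟫ • v s (x - y)‖ :=
          norm_integral_le_integral_norm _
      _ ≤ ∫ s in Ioo (0:ℝ) t, h s := by
          apply integral_mono_of_nonneg (ae_of_all _ fun s => norm_nonneg _) hhint
          exact (ae_restrict_iff' measurableSet_Ioo).2 (ae_of_all _ (key x))
      _ = (A1 * θ^2) * ∫ s in Ioo (0:ℝ) t, (t - s) ^ (-(7:ℝ)/8) * s ^ (-(5:ℝ)/8) :=
          integral_const_mul _ _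
      _ ≤ (A1 * θ^2) * ((32/3 * Real.sqrt 2) * t ^ (-(1:ℝ)/2)) :=
          mul_le_mul_of_nonneg_left htime.2 (mul_nonneg A1_pos.le (sq_nonneg θ))
      _ = (A1 * (32/3 * Real.sqrt 2)) * θ^2 * t ^ (-(1:ℝ)/2) := by ring
  rw [eLpNorm_exponent_top]
  have := eLpNormEssSup_le_of_ae_bound (μ := (volume : Measure E3))
    (f := duhamel v t) (C := (A1 * (32/3 * Real.sqrt 2)) * θ^2 * t ^ (-(1:ℝ)/2))
    (ae_of_all _ hbd)
  convert this using 2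
  norm_num
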